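/- Let P ∈ SL(2,ℤ) with top row entries a, b, and set Q = P·ᵗP, M = Q·s2·Q⁻¹·s1 where s1 = [[1,0],[-1,1]], s2 = [[1,1],[0,1]]. If |trace(M)| ≤ 2 then a² + b² ≤ 2, i.e. a, b ∈ {-1,0,1}. -/

import Mathlib

open Matrix

def s1 : Matrix.SpecialLinearGroup (Fin 2) ℤ :=
  ⟨!![1, 0; -1, 1], by norm_num [Matrix.det_fin_two_of]⟩

def s2 : Matrix.SpecialLinearGroup (Fin 2) ℤ :=
  ⟨!![1, 1; 0, 1], by norm_num [Matrix.det_fin_two_of]⟩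

def slTranspose (P : Matrix.SpecialLinearGroup (Fin 2) ℤ) :
    Matrix.SpecialLinearGroup (Fin 2) ℤ :=
  ⟨(P : Matrix (Fin 2) (Fin 2) ℤ)ᵀ, by simp [Matrix.det_transpose]⟩

/-- If `M = Q·s2·Q⁻¹·s1` with `Q = P·ᵗP` is non-hyperbolic (`|trace M| ≤ 2`), then
`a² + b² ≤ 2`, i.e. `a, b ∈ {-1,0,1}`. -/
theorem small_top_row_of_nonhyperbolic (P : Matrix.SpecialLinearGroup (Fin 2) ℤ)
    (a b : ℤ) (ha : (P : Matrix (Fin 2) (Fin 2) ℤ) 0 0 = a)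
    (hb : (P : Matrix (Fin 2) (Fin 2) ℤ) 0 1 = b)
    (Q : Matrix.SpecialLinearGroup (Fin 2) ℤ) (hQ : Q = P * slTranspose P)
    (M : Matrix.SpecialLinearGroup (Fin 2) ℤ) (hM : M = Q * s2 * Q⁻¹ * s1)
    (htr : |Matrix.trace ((M : Matrix (Fin 2) (Fin 2) ℤ))| ≤ 2) :
    a ^ 2 + b ^ 2 ≤ 2 ∧ a ∈ ({-1, 0, 1} : Set ℤ) ∧ b ∈ ({-1, 0, 1} : Set ℤ) := by
  obtain ⟨c, hc⟩ : ∃ c, (P : Matrix (Fin 2) (Fin 2) ℤ) 1 0 = c := ⟨_, rfl⟩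
  obtain ⟨d, hd⟩ : ∃ d, (P : Matrix (Fin 2) (Fin 2) ℤ) 1 1 = d := ⟨_, rfl⟩
  have hdet : a * d - b * c = 1 := by
    have := P.property
    rw [Matrix.det_fin_two] at this
    rw [ha, hb, hc, hd] at this
    linarith
  have key : Matrix.trace ((M : Matrix (Fin 2) (Fin 2) ℤ)) = 2 - (a ^ 2 + b ^ 2) ^ 2 := by
    subst hM hQ
    simp only [Matrix.SpecialLinearGroup.coe_mul, Matrix.SpecialLinearGroup.coe_inv]
    simp only [Matrix.SpecialLinearGroup.coe_mul, Matrix.SpecialLinearGroup.coe_inv,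
      slTranspose, s1, s2, Matrix.trace_fin_two, Matrix.mul_apply, Fin.sum_univ_two,
      Matrix.adjugate_fin_two, Matrix.transpose_apply, Matrix.cons_val', Matrix.cons_val_zero,
      Matrix.cons_val_one, Matrix.head_cons, Matrix.head_fin_const, Matrix.empty_val',
      Matrix.cons_val_fin_one, Matrix.of_apply]
    rw [ha, hb, hc, hd]
    linear_combination (2 * (a * d - b * c + 1)) * hdet
  rw [key] at htr
  obtain ⟨h1, h2⟩ := abs_le.mp htr
  have hq : a ^ 2 + b ^ 2 ≤ 2 := by nlinarith [sq_nonneg a, sq_nonneg b, sq_nonneg (a^2+b^2-2)]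
  have ha1 : a ≤ 1 := by nlinarith [sq_nonneg (a - 1), sq_nonneg b]
  have ha2 : -1 ≤ a := by nlinarith [sq_nonneg (a + 1), sq_nonneg b]
  have hb1 : b ≤ 1 := by nlinarith [sq_nonneg (b - 1), sq_nonneg a]
  have hb2 : -1 ≤ b := by nlinarith [sq_nonneg (b + 1), sq_nonneg a]
  refine ⟨hq, ?_, ?_⟩ <;> simp only [Set.mem_insert_iff, Set.mem_singleton_iff] <;> omega
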